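/- Let K ≥ 1 and j ≥ 0 be integers and let a, b be real numbers. Then the symmetric limit lim_{M→∞} ∑_{m=−M}^{M} I_{C₀}(K,j;a−m,b) exists and F(K,j;a,b) = (1/2)·δ_{j} + (1/2)·exp(2πi a K + 2πi b K²) + lim_{M→∞} ∑_{m=−M}^{M} I_{C₀}(K,j;a−m,b), where δ_j equals 1 if j = 0 and 0 otherwise. -/

import Mathlib

open scoped BigOperators

/-- The truncated theta function
`F(K,j;a,b) = K^{-j} ∑_{k=0}^{K} k^j exp(2πi a k + 2πi b k²)`,
with the convention `0^0 = 1`. -/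
noncomputable def truncTheta (K j : ℕ) (a b : ℝ) : ℂ :=
  ((K : ℂ) ^ j)⁻¹ * ∑ k ∈ Finset.range (K + 1),
    (k : ℂ) ^ j *
      Complex.exp (2 * (Real.pi : ℂ) * Complex.I * (a : ℂ) * (k : ℂ) +
        2 * (Real.pi : ℂ) * Complex.I * (b : ℂ) * (k : ℂ) ^ 2)

/-- `I_{C₀}(K,j;c,b) = K^{-j} ∫_0^K t^j exp(2πi c t + 2πi b t²) dt`. -/
noncomputable def IC0 (K j : ℕ) (c b : ℝ) : ℂ :=
  ((K : ℂ) ^ j)⁻¹ * ∫ t in (0 : ℝ)..(K : ℝ), (t : ℂ) ^ j *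
    Complex.exp (2 * (Real.pi : ℂ) * Complex.I * (c : ℂ) * (t : ℂ) +
      2 * (Real.pi : ℂ) * Complex.I * (b : ℂ) * (t : ℂ) ^ 2)

open Complex
open scoped Real

noncomputable section
namespace TTP

/-- `2πi·a` as a complex number. -/
def cc (a : ℝ) : ℂ := 2 * (Real.pi : ℂ) * Complex.I * a

/-- `p(t)·exp(2πi a t + 2πi b t²)` for a complex polynomial `p`. -/
def ff (a b : ℝ) (p : Polynomial ℂ) (t : ℝ) : ℂ :=
  p.eval (t : ℂ) * Complex.exp (cc a * t + cc b * t ^ 2)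

/-- The "derivative polynomial": `(ff a b p)' = ff a b (pder a b p)`. -/
def pder (a b : ℝ) (p : Polynomial ℂ) : Polynomial ℂ :=
  p.derivative + p * (Polynomial.C (cc a) + Polynomial.C (2 * cc b) * Polynomial.X)

lemma continuous_ff (a b : ℝ) (p : Polynomial ℂ) : Continuous (ff a b p) := by
  apply Continuous.mul
  · exact p.continuous.comp Complex.continuous_ofReal
  · exact Complex.continuous_exp.comp (by fun_prop)

lemma hasDerivAt_ff (a b : ℝ) (p : Polynomial ℂ) (t : ℝ) :
    HasDerivAt (ff a b p) (ff a b (pder a b p) t) t := by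
  have hexp : HasDerivAt (fun z : ℂ => Complex.exp (cc a * z + cc b * z ^ 2))
      ((cc a + 2 * cc b * t) * Complex.exp (cc a * t + cc b * (t : ℂ) ^ 2)) (t : ℂ) := by
    have h : HasDerivAt (fun z : ℂ => cc a * z + cc b * z ^ 2)
        (cc a + 2 * cc b * (t : ℂ)) (t : ℂ) := by
      have h1 := ((hasDerivAt_id ((t : ℝ) : ℂ)).const_mul (cc a)).add
        ((hasDerivAt_pow 2 ((t : ℝ) : ℂ)).const_mul (cc b))
      refine h1.congr_deriv ?_
      ring
    simpa [mul_comm] using h.cexp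
  have h2 := (p.hasDerivAt ((t : ℝ) : ℂ)).mul hexp
  have h3 : HasDerivAt (fun z : ℂ => p.eval z * Complex.exp (cc a * z + cc b * z ^ 2))
      ((pder a b p).eval (t : ℂ) * Complex.exp (cc a * t + cc b * (t : ℂ) ^ 2)) (t : ℂ) := by
    refine h2.congr_deriv ?_
    simp only [pder, Polynomial.eval_add, Polynomial.eval_mul, Polynomial.eval_C,
      Polynomial.eval_X]
    ring
  exact h3.comp_ofReal

/-- `exp(2πi m t)`. -/
def em (m : ℤ) (t : ℝ) : ℂ := Complex.exp (2 * (Real.pi : ℂ) * Complex.I * m * t)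

lemma continuous_em (m : ℤ) : Continuous (em m) :=
  Complex.continuous_exp.comp (by fun_prop)

lemma hasDerivAt_em (m : ℤ) (t : ℝ) :
    HasDerivAt (em m) (2 * (Real.pi : ℂ) * Complex.I * m * em m t) t := by
  have h : HasDerivAt (fun z : ℂ => Complex.exp (2 * (Real.pi : ℂ) * Complex.I * m * z))
      (2 * (Real.pi : ℂ) * Complex.I * m * Complex.exp (2 * (Real.pi : ℂ) * Complex.I * m * t))
      (t : ℂ) := by
    simpa [mul_comm] using ((hasDerivAt_id ((t : ℝ) : ℂ)).const_mul
      (2 * (Real.pi : ℂ) * Complex.I * m)).cexp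
  exact h.comp_ofReal

lemma em_int (m n : ℤ) : em m ((n : ℤ) : ℝ) = 1 := by
  have : (2 * (Real.pi : ℂ) * Complex.I * m * ((n : ℤ) : ℝ)) = (m * n : ℤ) * (2 * Real.pi * Complex.I) := by
    push_cast; ring
  rw [em, this, Complex.exp_int_mul_two_pi_mul_I]

lemma em_nat (m : ℤ) (n : ℕ) : em m (n : ℝ) = 1 := by
  simpa using em_int m n

lemma em_zero_left (t : ℝ) : em 0 t = 1 := by simp [em]

lemma em_eq_exp_mul_I (m : ℤ) (t : ℝ) :
    em m t = Complex.exp (((2 * Real.pi * m * t : ℝ) : ℂ) * Complex.I) := by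
  rw [em]; congr 1; push_cast; ring

lemma norm_em (m : ℤ) (t : ℝ) : ‖em m t‖ = 1 := by
  rw [em_eq_exp_mul_I, Complex.norm_exp_ofReal_mul_I]

lemma em_add_em_neg (m : ℤ) (t : ℝ) :
    em m t + em (-m) t = 2 * ((Real.cos (2 * Real.pi * m * t) : ℝ) : ℂ) := by
  rw [em_eq_exp_mul_I, em_eq_exp_mul_I, Complex.exp_mul_I, Complex.exp_mul_I]
  push_cast
  rw [show ((2:ℂ) * (Real.pi:ℂ) * -(m:ℂ) * (t:ℂ)) = -(2 * (Real.pi:ℂ) * (m:ℂ) * (t:ℂ)) by ring]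
  rw [Complex.cos_neg, Complex.sin_neg]
  ring

/-- `cos(2πmt)/(2π²m²)` as a complex function, written with exponentials. -/
def Hc (m : ℕ) (t : ℝ) : ℂ :=
  (em m t + em (-(m:ℤ)) t) / (4 * (Real.pi : ℂ) ^ 2 * (m : ℂ) ^ 2)

lemma continuous_Hc (m : ℕ) : Continuous (Hc m) :=
  ((continuous_em m).add (continuous_em (-(m:ℤ)))).div_const _

lemma Hc_eq (m : ℕ) (t : ℝ) :
    Hc m t = ((Real.cos (2 * Real.pi * m * t) / (2 * Real.pi ^ 2 * m ^ 2) : ℝ) : ℂ) := by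
  rw [Hc, em_add_em_neg]
  rcases Nat.eq_zero_or_pos m with h | h
  · simp [h]
  · have hm : ((m : ℂ)) ≠ 0 := Nat.cast_ne_zero.mpr h.ne'
    have hπ : ((Real.pi : ℂ)) ≠ 0 := Complex.ofReal_ne_zero.mpr Real.pi_ne_zero
    push_cast
    field_simp
    ring

lemma Hc_zero (t : ℝ) : Hc 0 t = 0 := by simp [Hc]

lemma Hc_nat (m : ℕ) (n : ℕ) :
    Hc m ((n : ℕ) : ℝ) = 1 / (2 * (Real.pi : ℂ) ^ 2 * (m : ℂ) ^ 2) := by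
  rcases Nat.eq_zero_or_pos m with h | h
  · simp [h, Hc]
  · have hm : ((m : ℂ)) ≠ 0 := Nat.cast_ne_zero.mpr h.ne'
    have hπ : ((Real.pi : ℂ)) ≠ 0 := Complex.ofReal_ne_zero.mpr Real.pi_ne_zero
    rw [Hc, em_nat, em_nat]
    field_simp
    ring

lemma norm_Hc_le (m : ℕ) (t : ℝ) : ‖Hc m t‖ ≤ 1 / (2 * Real.pi ^ 2 * m ^ 2) := by
  rcases Nat.eq_zero_or_pos m with h | h
  · simp [h, Hc_zero]
  · have hm : (0:ℝ) < (m:ℝ) := Nat.cast_pos.mpr h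
    rw [Hc_eq]
    rw [Complex.norm_real]
    rw [Real.norm_eq_abs, abs_div]
    have h2 : |(2 * Real.pi ^ 2 * (m:ℝ) ^ 2)| = 2 * Real.pi ^ 2 * m ^ 2 :=
      abs_of_pos (by positivity)
    rw [h2]
    gcongr
    exact Real.abs_cos_le_one _

lemma hasDerivAt_Hc (m : ℕ) (hm : 1 ≤ m) (t : ℝ) :
    HasDerivAt (Hc m) ((em (-(m:ℤ)) t - em m t) / (2 * (Real.pi : ℂ) * Complex.I * m)) t := by
  have h := ((hasDerivAt_em m t).add (hasDerivAt_em (-(m:ℤ)) t)).div_const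
    (4 * (Real.pi : ℂ) ^ 2 * (m : ℂ) ^ 2)
  refine h.congr_deriv ?_
  have hm : ((m : ℂ)) ≠ 0 := Nat.cast_ne_zero.mpr (by omega)
  have hπ : ((Real.pi : ℂ)) ≠ 0 := Complex.ofReal_ne_zero.mpr Real.pi_ne_zero
  have hI := Complex.I_ne_zero
  field_simp
  ring_nf
  rw [Complex.I_sq]
  push_cast
  ring

lemma bernoulliFun_two (x : ℝ) : bernoulliFun 2 x = x ^ 2 - x + 1 / 6 := by
  have hb2 : _root_.bernoulli 2 = 1 / 6 := by
    rw [bernoulli_eq_bernoulli'_of_ne_one (by norm_num), bernoulli'_two]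
  simp [bernoulliFun, Polynomial.bernoulli, Finset.sum_range_succ, hb2, bernoulli_one]
  ring

/-- pointwise Fourier expansion of the periodized Bernoulli polynomial `B₂` -/
lemma hasSum_cos (t : ℝ) :
    HasSum (fun n : ℕ => Real.cos (2 * Real.pi * n * t) / (2 * Real.pi ^ 2 * n ^ 2))
      (bernoulliFun 2 (Int.fract t) / 2) := by
  have hx : Int.fract t ∈ Set.Icc (0:ℝ) 1 := ⟨Int.fract_nonneg t, (Int.fract_lt_one t).le⟩
  have h := (hasSum_one_div_nat_pow_mul_cos (k := 1) one_ne_zero hx).mul_left (1 / (2 * Real.pi ^ 2))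
  convert h using 1
  · rfl
  · funext n
    have hper : Real.cos (2 * Real.pi * n * Int.fract t) = Real.cos (2 * Real.pi * n * t) := by
      conv_rhs => rw [show (t:ℝ) = Int.fract t + (⌊t⌋:ℝ) from by rw [Int.fract_add_floor]]
      rw [show 2 * Real.pi * (n:ℝ) * (Int.fract t + (⌊t⌋:ℝ))
          = 2 * Real.pi * n * Int.fract t + ((n * ⌊t⌋ : ℤ) : ℝ) * (2 * Real.pi) by push_cast; ring]
      rw [Real.cos_add_int_mul_two_pi]
    rcases Nat.eq_zero_or_pos n with hn | hn
    · simp [hn]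
    · have hn' : ((n:ℝ)) ≠ 0 := Nat.cast_ne_zero.mpr hn.ne'
      rw [← hper]
      have hπ := Real.pi_ne_zero
      field_simp
      ring
  · rw [bernoulliFun]
    norm_num [Nat.factorial]
    have hπ := Real.pi_ne_zero
    field_simp


/-- The periodized Bernoulli function `B₂({t})/2`, as a complex-valued function. -/
def SB (t : ℝ) : ℂ := ((bernoulliFun 2 (Int.fract t) / 2 : ℝ) : ℂ)

/-- The polynomial `((t-k)² - (t-k) + 1/6)/2`, complex version. -/
def Wc (k : ℕ) (t : ℝ) : ℂ := (((t:ℂ) - k) ^ 2 - ((t:ℂ) - k) + 1/6) / 2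

lemma continuous_Wc (k : ℕ) : Continuous (Wc k) := by
  unfold Wc; fun_prop

lemma hasSum_Hc (t : ℝ) : HasSum (fun m : ℕ => Hc m t) (SB t) := by
  have h := Complex.hasSum_ofReal.mpr (hasSum_cos t)
  rw [show (fun m : ℕ => Hc m t)
    = fun m : ℕ => ((Real.cos (2 * Real.pi * m * t) / (2 * Real.pi ^ 2 * m ^ 2) : ℝ) : ℂ)
    from funext fun m => Hc_eq m t]
  exact h

lemma SB_eq_Wc (k : ℕ) {t : ℝ} (ht : t ∈ Set.Icc (k:ℝ) ((k:ℝ)+1)) : SB t = Wc k t := by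
  rcases eq_or_lt_of_le ht.2 with h | h
  · rw [SB, h, show ((k:ℝ)+1) = (((k+1:ℕ):ℤ):ℝ) by push_cast; ring, Int.fract_intCast]
    rw [bernoulliFun_two, Wc]
    push_cast
    norm_num
  · have hfloor : ⌊t⌋ = (k:ℤ) := by
      rw [Int.floor_eq_iff]
      constructor
      · exact_mod_cast ht.1
      · push_cast; exact h
    rw [SB, Int.fract, hfloor, bernoulliFun_two, Wc]
    push_cast
    ring

lemma Wc_left (k : ℕ) : Wc k (k:ℝ) = 1/12 := by
  rw [Wc]; norm_num

lemma Wc_right (k : ℕ) : Wc k ((k:ℝ)+1) = 1/12 := by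
  rw [Wc]; push_cast; ring_nf

lemma hasDerivAt_Wc (k : ℕ) (t : ℝ) :
    HasDerivAt (Wc k) ((t:ℂ) - k - 1/2) t := by
  have h0 : HasDerivAt (fun z : ℂ => z - (k:ℂ)) 1 (t:ℂ) := (hasDerivAt_id _).sub_const _
  have h : HasDerivAt (fun z : ℂ => ((z - (k:ℂ)) ^ 2 - (z - (k:ℂ)) + 1/6) / 2)
      ((t:ℂ) - k - 1/2) (t:ℂ) := by
    have := (((h0.pow 2).sub h0).add_const (1/6 : ℂ)).div_const 2
    refine this.congr_deriv ?_
    ring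
  exact h.comp_ofReal

/-- Integration by parts for everywhere-differentiable complex functions on an interval. -/
lemma ibp (u v u' v' : ℝ → ℂ) (hu : ∀ t, HasDerivAt u (u' t) t)
    (hv : ∀ t, HasDerivAt v (v' t) t) (hu' : Continuous u') (hv' : Continuous v')
    (x y : ℝ) :
    ∫ t in x..y, u' t * v t = u y * v y - u x * v x - ∫ t in x..y, u t * v' t := by
  have hu_c : Continuous u := continuous_iff_continuousAt.mpr fun t => (hu t).continuousAt
  have hv_c : Continuous v := continuous_iff_continuousAt.mpr fun t => (hv t).continuousAt
  have key := intervalIntegral.integral_eq_sub_of_hasDerivAt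
    (a := x) (b := y) (f := fun t => u t * v t) (f' := fun t => u' t * v t + u t * v' t)
    (fun t _ => (hu t).mul (hv t))
    (((hu'.mul hv_c).add (hu_c.mul hv')).intervalIntegrable x y)
  rw [intervalIntegral.integral_add (f := fun t => u' t * v t) (g := fun t => u t * v' t) ((hu'.mul hv_c).intervalIntegrable x y)
    ((hu_c.mul hv').intervalIntegrable x y)] at key
  linear_combination key


lemma hasDerivAt_lin (k : ℕ) (t : ℝ) :
    HasDerivAt (fun t : ℝ => (t:ℂ) - k - 1/2) 1 t := by
  have h : HasDerivAt (fun z : ℂ => z - (k:ℂ) - 1/2) 1 (t:ℂ) :=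
    ((hasDerivAt_id _).sub_const _).sub_const _
  exact h.comp_ofReal

/-- First integration by parts: relates `∫ (ff p)'·e(-mt)` to `∫ ff p·e(-mt)`. -/
lemma intB (a b : ℝ) (p : Polynomial ℂ) (K : ℕ) (m : ℤ) :
    ∫ t in (0:ℝ)..(K:ℝ), ff a b (pder a b p) t * em (-m) t
      = (ff a b p K - ff a b p 0)
        + (2 * (Real.pi:ℂ) * Complex.I * m) * ∫ t in (0:ℝ)..(K:ℝ), ff a b p t * em (-m) t := by
  have h := ibp (ff a b p) (em (-m)) (ff a b (pder a b p))
      (fun t => 2 * (Real.pi:ℂ) * Complex.I * ((-m : ℤ) : ℂ) * em (-m) t)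
      (hasDerivAt_ff a b p) (hasDerivAt_em (-m)) (continuous_ff a b _)
      (continuous_const.mul (continuous_em (-m))) 0 (K:ℝ)
  have e1 : em (-m) (K:ℝ) = 1 := em_nat _ K
  have e0 : em (-m) (0:ℝ) = 1 := by simpa using em_nat (-m) 0
  rw [e1, e0] at h
  have h2 : (∫ t in (0:ℝ)..(K:ℝ),
      ff a b p t * (2 * (Real.pi:ℂ) * Complex.I * ((-m : ℤ) : ℂ) * em (-m) t))
      = (2 * (Real.pi:ℂ) * Complex.I * ((-m : ℤ) : ℂ)) *
        ∫ t in (0:ℝ)..(K:ℝ), ff a b p t * em (-m) t := by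
    rw [← intervalIntegral.integral_const_mul]
    congr 1
    funext t
    ring
  rw [h2] at h
  rw [h]
  push_cast
  ring

/-- The symmetric pair `J m + J (-m)` in terms of a second integration by parts. -/
lemma pair (a b : ℝ) (p : Polynomial ℂ) (K : ℕ) (m : ℕ) (hm : 1 ≤ m) :
    (∫ t in (0:ℝ)..(K:ℝ), ff a b p t * em (-(m:ℤ)) t)
      + (∫ t in (0:ℝ)..(K:ℝ), ff a b p t * em ((m:ℤ)) t)
      = (ff a b (pder a b p) K - ff a b (pder a b p) 0) / (2 * (Real.pi:ℂ)^2 * (m:ℂ)^2)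
        - ∫ t in (0:ℝ)..(K:ℝ), ff a b (pder a b (pder a b p)) t * Hc m t := by
  set c : ℂ := 2 * (Real.pi:ℂ) * Complex.I * (m:ℂ) with hc_def
  have hπ : ((Real.pi : ℂ)) ≠ 0 := Complex.ofReal_ne_zero.mpr Real.pi_ne_zero
  have hmc : ((m : ℂ)) ≠ 0 := Nat.cast_ne_zero.mpr (by omega)
  have hc : c ≠ 0 := by
    simp only [hc_def]
    exact mul_ne_zero (mul_ne_zero (mul_ne_zero two_ne_zero hπ) Complex.I_ne_zero) hmc
  have E1 := intB a b p K m
  have E2 := intB a b p K (-m)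
  rw [neg_neg] at E2
  -- second integration by parts
  have E3 := ibp (ff a b (pder a b p)) (Hc m) (ff a b (pder a b (pder a b p)))
      (fun t => (em (-(m:ℤ)) t - em (m:ℤ) t) / c)
      (hasDerivAt_ff a b _) (fun t => by simpa [hc_def] using hasDerivAt_Hc m hm t)
      (continuous_ff a b _)
      (((continuous_em _).sub (continuous_em _)).div_const _) 0 (K:ℝ)
  have eK : Hc m (K:ℝ) = 1 / (2 * (Real.pi:ℂ)^2 * (m:ℂ)^2) := Hc_nat m K
  have e0 : Hc m (0:ℝ) = 1 / (2 * (Real.pi:ℂ)^2 * (m:ℂ)^2) := by simpa using Hc_nat m 0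
  rw [eK, e0] at E3
  have E4 : c * (∫ t in (0:ℝ)..(K:ℝ), ff a b (pder a b p) t * ((em (-(m:ℤ)) t - em (m:ℤ) t) / c))
      = (∫ t in (0:ℝ)..(K:ℝ), ff a b (pder a b p) t * em (-(m:ℤ)) t)
        - ∫ t in (0:ℝ)..(K:ℝ), ff a b (pder a b p) t * em ((m:ℤ)) t := by
    have : (fun t : ℝ => ff a b (pder a b p) t * ((em (-(m:ℤ)) t - em (m:ℤ) t) / c))
        = fun t : ℝ => c⁻¹ * (ff a b (pder a b p) t * em (-(m:ℤ)) t
            - ff a b (pder a b p) t * em ((m:ℤ)) t) := by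
      funext t; field_simp
    rw [this, intervalIntegral.integral_const_mul,
      intervalIntegral.integral_sub (f := fun t => ff a b (pder a b p) t * em (-(m:ℤ)) t)
        (g := fun t => ff a b (pder a b p) t * em ((m:ℤ)) t)
        (((continuous_ff a b _).mul (continuous_em _)).intervalIntegrable _ _)
        (((continuous_ff a b _).mul (continuous_em _)).intervalIntegrable _ _),
      ← mul_assoc, mul_inv_cancel₀ hc, one_mul]
  apply mul_left_cancel₀ hc
  push_cast at E1 E2
  rw [hc_def]
  linear_combination -E1 + E2 + c * E3 - E4

/-- Per-interval second-order Euler–Maclaurin identity. -/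
lemma interval_piece (a b : ℝ) (p : Polynomial ℂ) (k : ℕ) :
    ∫ t in (k:ℝ)..((k:ℝ)+1), ff a b (pder a b (pder a b p)) t * Wc k t
      = (ff a b (pder a b p) ((k:ℝ)+1) - ff a b (pder a b p) (k:ℝ)) / 12
        - ((ff a b p ((k:ℝ)+1) + ff a b p (k:ℝ)) / 2
            - ∫ t in (k:ℝ)..((k:ℝ)+1), ff a b p t) := by
  have I1 := ibp (ff a b (pder a b p)) (Wc k) (ff a b (pder a b (pder a b p)))
      (fun t => (t:ℂ) - k - 1/2)
      (hasDerivAt_ff a b _) (hasDerivAt_Wc k) (continuous_ff a b _) (by fun_prop)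
      (k:ℝ) ((k:ℝ)+1)
  rw [Wc_left, Wc_right] at I1
  have I2 := ibp (ff a b p) (fun t : ℝ => (t:ℂ) - k - 1/2) (ff a b (pder a b p))
      (fun _ => 1)
      (hasDerivAt_ff a b _) (hasDerivAt_lin k) (continuous_ff a b _) continuous_const
      (k:ℝ) ((k:ℝ)+1)
  simp only [mul_one] at I2
  have l1 : ((((k:ℝ)+1 : ℝ)):ℂ) - (k:ℂ) - 1/2 = 1/2 := by push_cast; ring
  have l0 : (((k:ℝ) : ℝ):ℂ) - (k:ℂ) - 1/2 = -(1/2) := by push_cast; ring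
  rw [l1, l0] at I2
  linear_combination I1 - I2

lemma intervalIntegrable_SB (a b : ℝ) (p : Polynomial ℂ) (k : ℕ) :
    IntervalIntegrable (fun t => ff a b p t * SB t) MeasureTheory.volume (k:ℝ) ((k:ℝ)+1) := by
  rw [intervalIntegrable_iff_integrableOn_Ioc_of_le (by linarith)]
  refine MeasureTheory.IntegrableOn.congr_fun
    (f := fun t => ff a b p t * Wc k t) ?_ ?_ measurableSet_Ioc
  · exact ((continuous_ff a b p).mul (continuous_Wc k)).integrableOn_Ioc
  · intro t ht
    show ff a b p t * Wc k t = ff a b p t * SB t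
    rw [SB_eq_Wc k (Set.Ioc_subset_Icc_self ht)]

/-- The summed second-order Euler–Maclaurin identity on `[0,K]`. -/
lemma sum_piece (a b : ℝ) (p : Polynomial ℂ) (K : ℕ) :
    ∫ t in (0:ℝ)..(K:ℝ), ff a b (pder a b (pder a b p)) t * SB t
      = (ff a b (pder a b p) (K:ℝ) - ff a b (pder a b p) 0) / 12
        - ((∑ k ∈ Finset.range (K+1), ff a b p (k:ℝ))
            - (ff a b p 0 + ff a b p (K:ℝ)) / 2
            - ∫ t in (0:ℝ)..(K:ℝ), ff a b p t) := by
  set r := pder a b (pder a b p) with hr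
  have hsum := intervalIntegral.sum_integral_adjacent_intervals
    (a := fun k : ℕ => (k:ℝ)) (n := K) (μ := MeasureTheory.volume)
    (f := fun t => ff a b r t * SB t)
    (fun k _ => by
      have := intervalIntegrable_SB a b r k
      simpa [Nat.cast_succ] using this)
  simp only [Nat.cast_zero] at hsum
  have hsum2 := intervalIntegral.sum_integral_adjacent_intervals
    (a := fun k : ℕ => (k:ℝ)) (n := K) (μ := MeasureTheory.volume)
    (f := fun t => ff a b p t)
    (fun k _ => (continuous_ff a b p).intervalIntegrable _ _)
  simp only [Nat.cast_zero] at hsum2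
  have hval : ∀ k : ℕ, (∫ t in ((k:ℕ):ℝ)..(((k+1:ℕ)):ℝ), ff a b r t * SB t)
      = (ff a b (pder a b p) ((k:ℝ)+1) - ff a b (pder a b p) (k:ℝ)) / 12
        - ((ff a b p ((k:ℝ)+1) + ff a b p (k:ℝ)) / 2
            - ∫ t in (k:ℝ)..((k:ℝ)+1), ff a b p t) := by
    intro k
    have hcast : (((k+1:ℕ)):ℝ) = (k:ℝ)+1 := by push_cast; ring
    rw [hcast]
    rw [intervalIntegral.integral_congr (g := fun t => ff a b r t * Wc k t) ?_]
    · exact interval_piece a b p k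
    · intro t ht
      rw [Set.uIcc_of_le (by linarith)] at ht
      show ff a b r t * SB t = ff a b r t * Wc k t
      rw [SB_eq_Wc k ht]
  -- telescoping sums
  have T1 : ∑ k ∈ Finset.range K,
      (ff a b (pder a b p) (((k+1:ℕ)):ℝ) - ff a b (pder a b p) ((k:ℕ):ℝ))
      = ff a b (pder a b p) ((K:ℕ):ℝ) - ff a b (pder a b p) ((0:ℕ):ℝ) :=
    Finset.sum_range_sub (fun k : ℕ => ff a b (pder a b p) ((k:ℕ):ℝ)) K
  have T2 : ∑ k ∈ Finset.range K, ff a b p (((k+1:ℕ)):ℝ)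
      = (∑ k ∈ Finset.range (K+1), ff a b p ((k:ℕ):ℝ)) - ff a b p ((0:ℕ):ℝ) := by
    rw [Finset.sum_range_succ' (fun k : ℕ => ff a b p ((k:ℕ):ℝ)) K]
    ring
  have T3 : ∑ k ∈ Finset.range K, ff a b p ((k:ℕ):ℝ)
      = (∑ k ∈ Finset.range (K+1), ff a b p ((k:ℕ):ℝ)) - ff a b p ((K:ℕ):ℝ) := by
    rw [Finset.sum_range_succ (fun k : ℕ => ff a b p ((k:ℕ):ℝ)) K]
    ring
  rw [← hsum, ← hsum2]
  have : ∀ k : ℕ, (k:ℝ)+1 = (((k+1:ℕ)):ℝ) := by intro k; push_cast; ring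
  calc ∑ k ∈ Finset.range K, ∫ t in ((k:ℕ):ℝ)..(((k+1:ℕ)):ℝ), ff a b r t * SB t
      = ∑ k ∈ Finset.range K,
        ((ff a b (pder a b p) (((k+1:ℕ)):ℝ) - ff a b (pder a b p) ((k:ℕ):ℝ)) / 12
          - ((ff a b p (((k+1:ℕ)):ℝ) + ff a b p ((k:ℕ):ℝ)) / 2
              - ∫ t in ((k:ℕ):ℝ)..(((k+1:ℕ)):ℝ), ff a b p t)) := by
        refine Finset.sum_congr rfl fun k _ => ?_
        rw [hval k, this k]
    _ = (∑ k ∈ Finset.range K,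
          (ff a b (pder a b p) (((k+1:ℕ)):ℝ) - ff a b (pder a b p) ((k:ℕ):ℝ))) / 12
        - ((∑ k ∈ Finset.range K, ff a b p (((k+1:ℕ)):ℝ))
            + ∑ k ∈ Finset.range K, ff a b p ((k:ℕ):ℝ)) / 2
        + ∑ k ∈ Finset.range K, ∫ t in ((k:ℕ):ℝ)..(((k+1:ℕ)):ℝ), ff a b p t := by
        simp only [Finset.sum_sub_distrib, Finset.sum_add_distrib, add_div, sub_div, Finset.sum_div]
        ring
    _ = _ := by
        rw [T1, T2, T3]
        simp only [Nat.cast_zero]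
        ring

lemma hasSum_const_div (Δ : ℂ) :
    HasSum (fun m : ℕ => Δ / (2 * (Real.pi:ℂ)^2 * (m:ℂ)^2)) (Δ / 12) := by
  have hπ : ((Real.pi : ℂ)) ≠ 0 := Complex.ofReal_ne_zero.mpr Real.pi_ne_zero
  have h1 := Complex.hasSum_ofReal.mpr hasSum_zeta_two
  have h2 := h1.mul_left (Δ / (2 * (Real.pi:ℂ)^2))
  convert h2 using 1
  · rfl
  · funext n
    rcases Nat.eq_zero_or_pos n with hn | hn
    · simp [hn]
    · have hn' : ((n:ℂ)) ≠ 0 := Nat.cast_ne_zero.mpr hn.ne'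
      push_cast
      field_simp
  · push_cast
    field_simp
    ring

lemma hasSum_int (a b : ℝ) (p : Polynomial ℂ) (K : ℕ) :
    HasSum (fun m : ℕ => ∫ t in (0:ℝ)..(K:ℝ), ff a b p t * Hc m t)
      (∫ t in (0:ℝ)..(K:ℝ), ff a b p t * SB t) := by
  have hK0 : (0:ℝ) ≤ (K:ℝ) := Nat.cast_nonneg K
  obtain ⟨C, hC⟩ := (isCompact_Icc (a := (0:ℝ)) (b := (K:ℝ))).exists_bound_of_continuousOn
    (continuous_ff a b p).continuousOn
  have hC0 : 0 ≤ C := le_trans (norm_nonneg _) (hC 0 ⟨le_refl _, hK0⟩)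
  have key : HasSum (fun m : ℕ => ∫ t in Set.Ioc (0:ℝ) (K:ℝ), ff a b p t * Hc m t)
      (∫ t in Set.Ioc (0:ℝ) (K:ℝ), (∑' m : ℕ, ff a b p t * Hc m t)) := by
    apply MeasureTheory.hasSum_integral_of_summable_integral_norm
    · intro m
      exact ((continuous_ff a b p).mul (continuous_Hc m)).integrableOn_Ioc
    · have hsummable : Summable (fun m : ℕ => (K:ℝ) * C * (1/(2*Real.pi^2*(m:ℝ)^2))) := by
        refine (hasSum_zeta_two.summable.mul_left ((K:ℝ) * C * (1/(2*Real.pi^2)))).congr fun m => ?_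
        simp only [one_div, mul_inv]
        ring
      refine Summable.of_nonneg_of_le (fun m => ?_) (fun m => ?_) hsummable
      · exact MeasureTheory.integral_nonneg fun t => norm_nonneg _
      · have hbound : ∀ t ∈ Set.Ioc (0:ℝ) (K:ℝ),
            ‖ff a b p t * Hc m t‖ ≤ C * (1/(2*Real.pi^2*(m:ℝ)^2)) := by
          intro t ht
          rw [norm_mul]
          have h1 := hC t (Set.Ioc_subset_Icc_self ht)
          have h2 := norm_Hc_le m t
          exact mul_le_mul h1 (by simpa using h2) (norm_nonneg _) hC0
        calc (∫ t in Set.Ioc (0:ℝ) (K:ℝ), ‖ff a b p t * Hc m t‖)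
            ≤ ∫ _t in Set.Ioc (0:ℝ) (K:ℝ), C * (1/(2*Real.pi^2*(m:ℝ)^2)) := by
              apply MeasureTheory.integral_mono_of_nonneg
              · exact Filter.Eventually.of_forall fun t => norm_nonneg _
              · exact MeasureTheory.integrableOn_const
                  measure_Ioc_lt_top.ne
              · filter_upwards [MeasureTheory.ae_restrict_mem measurableSet_Ioc] with t ht
                exact hbound t ht
          _ = (K:ℝ) * C * (1/(2*Real.pi^2*(m:ℝ)^2)) := by
              rw [MeasureTheory.setIntegral_const, Real.volume_real_Ioc_of_le hK0, smul_eq_mul]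
              ring
  have htsum : ∀ t : ℝ, (∑' m : ℕ, ff a b p t * Hc m t) = ff a b p t * SB t := by
    intro t
    exact ((hasSum_Hc t).mul_left (ff a b p t)).tsum_eq
  rw [show (fun m : ℕ => ∫ t in (0:ℝ)..(K:ℝ), ff a b p t * Hc m t)
      = (fun m : ℕ => ∫ t in Set.Ioc (0:ℝ) (K:ℝ), ff a b p t * Hc m t)
    from funext fun m => intervalIntegral.integral_of_le hK0,
    intervalIntegral.integral_of_le hK0]
  simpa only [htsum] using key

/-- The main `HasSum` statement for the symmetric pair terms. -/
lemma hasSum_Q (a b : ℝ) (p : Polynomial ℂ) (K : ℕ) :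
    HasSum (fun m : ℕ =>
        (ff a b (pder a b p) (K:ℝ) - ff a b (pder a b p) 0) / (2 * (Real.pi:ℂ)^2 * (m:ℂ)^2)
          - ∫ t in (0:ℝ)..(K:ℝ), ff a b (pder a b (pder a b p)) t * Hc m t)
      ((∑ k ∈ Finset.range (K+1), ff a b p (k:ℝ))
        - (ff a b p 0 + ff a b p (K:ℝ)) / 2
        - ∫ t in (0:ℝ)..(K:ℝ), ff a b p t) := by
  have h := (hasSum_const_div (ff a b (pder a b p) (K:ℝ) - ff a b (pder a b p) 0)).sub
    (hasSum_int a b (pder a b (pder a b p)) K)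
  rw [sum_piece a b p K] at h
  convert h using 1
  · rfl
  ring

lemma sum_Icc_decomp (h : ℤ → ℂ) (g : ℕ → ℂ) (hg0 : g 0 = 0)
    (hg : ∀ m : ℕ, 1 ≤ m → g m = h (m:ℤ) + h (-(m:ℤ))) (M : ℕ) :
    ∑ m ∈ Finset.Icc (-(M:ℤ)) (M:ℤ), h m = h 0 + ∑ m ∈ Finset.range (M+1), g m := by
  induction M with
  | zero => simp [hg0]
  | succ M ih =>
    have hins : Finset.Icc (-((M+1:ℕ)):ℤ) ((M+1:ℕ):ℤ)
        = insert (-((M+1:ℕ):ℤ)) (insert ((M+1:ℕ):ℤ) (Finset.Icc (-((M:ℕ)):ℤ) ((M:ℕ):ℤ))) := by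
      ext x
      simp only [Finset.mem_Icc, Finset.mem_insert]
      push_cast
      omega
    rw [hins, Finset.sum_insert (by simp only [Finset.mem_insert, Finset.mem_Icc]; push_cast; omega),
      Finset.sum_insert (by simp only [Finset.mem_Icc]; push_cast; omega), ih]
    conv_rhs => rw [Finset.sum_range_succ]
    rw [hg (M+1) (by omega)]
    push_cast
    ring

lemma IC0_eq (K j : ℕ) (a b : ℝ) (m : ℤ) :
    IC0 K j (a - (m:ℝ)) b
      = ((K:ℂ)^j)⁻¹ * ∫ t in (0:ℝ)..(K:ℝ), ff a b (Polynomial.X^j) t * em (-m) t := by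
  rw [IC0]
  congr 1
  apply intervalIntegral.integral_congr
  intro t _
  show (t:ℂ)^j * Complex.exp _ = _
  simp only [ff, em, cc]
  rw [mul_assoc _ (Complex.exp _) (Complex.exp _), ← Complex.exp_add]
  simp only [Polynomial.eval_pow, Polynomial.eval_X]
  push_cast
  ring_nf

lemma truncTheta_eq (K j : ℕ) (a b : ℝ) :
    truncTheta K j a b
      = ((K:ℂ)^j)⁻¹ * ∑ k ∈ Finset.range (K+1), ff a b (Polynomial.X^j) (k:ℝ) := by
  rw [truncTheta]
  congr 1
  refine Finset.sum_congr rfl fun k _ => ?_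
  simp only [ff, cc, Polynomial.eval_pow, Polynomial.eval_X]
  push_cast
  ring_nf

end TTP
end


/-- Poisson summation for the truncated theta function: the symmetric limit
`lim_{M→∞} ∑_{m=-M}^{M} I_{C₀}(K,j;a−m,b)` exists and
`F(K,j;a,b) = δ_j/2 + exp(2πiaK+2πibK²)/2 + lim_{M→∞} ∑_{m=-M}^{M} I_{C₀}(K,j;a−m,b)`. -/
theorem truncTheta_poisson (K : ℕ) (hK : 1 ≤ K) (j : ℕ) (a b : ℝ) :
    ∃ L : ℂ,
      Filter.Tendsto
        (fun M : ℕ => ∑ m ∈ Finset.Icc (-(M : ℤ)) (M : ℤ), IC0 K j (a - (m : ℝ)) b)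
        Filter.atTop (nhds L) ∧
      truncTheta K j a b =
        (1/2 : ℂ) * (if j = 0 then 1 else 0) +
        (1/2 : ℂ) * Complex.exp (2 * (Real.pi : ℂ) * Complex.I * (a : ℂ) * (K : ℂ) +
          2 * (Real.pi : ℂ) * Complex.I * (b : ℂ) * (K : ℂ) ^ 2) + L := by
  classical
  set p : Polynomial ℂ := Polynomial.X ^ j with hp
  set J : ℤ → ℂ := fun m => ∫ t in (0:ℝ)..(K:ℝ), TTP.ff a b p t * TTP.em (-m) t with hJ
  set Q : ℕ → ℂ := fun m =>
    (TTP.ff a b (TTP.pder a b p) (K:ℝ) - TTP.ff a b (TTP.pder a b p) 0)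
        / (2 * (Real.pi:ℂ)^2 * (m:ℂ)^2)
      - ∫ t in (0:ℝ)..(K:ℝ), TTP.ff a b (TTP.pder a b (TTP.pder a b p)) t * TTP.Hc m t
    with hQdef
  set T : ℂ := ∑ k ∈ Finset.range (K+1), TTP.ff a b p (k:ℝ) with hT
  have hQ0 : Q 0 = 0 := by
    simp [hQdef, TTP.Hc_zero]
  have hQpair : ∀ m : ℕ, 1 ≤ m → Q m = J (m:ℤ) + J (-(m:ℤ)) := by
    intro m hm
    rw [hQdef, hJ]
    simp only
    rw [← TTP.pair a b p K m hm]
    rw [neg_neg]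
  have hQsum := TTP.hasSum_Q a b p K
  -- limit of the symmetric partial sums of `J`
  have hJ0 : J 0 = ∫ t in (0:ℝ)..(K:ℝ), TTP.ff a b p t := by
    rw [hJ]
    simp only [neg_zero, TTP.em_zero_left, mul_one]
  have hdecomp : ∀ M : ℕ, ∑ m ∈ Finset.Icc (-(M:ℤ)) (M:ℤ), J m
      = J 0 + ∑ m ∈ Finset.range (M+1), Q m :=
    TTP.sum_Icc_decomp J Q hQ0 hQpair
  have htend : Filter.Tendsto (fun M : ℕ => ∑ m ∈ Finset.Icc (-(M:ℤ)) (M:ℤ), J m)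
      Filter.atTop (nhds (T - (TTP.ff a b p 0 + TTP.ff a b p (K:ℝ)) / 2)) := by
    have h1 : Filter.Tendsto (fun M : ℕ => ∑ m ∈ Finset.range (M+1), Q m)
        Filter.atTop (nhds (T - (TTP.ff a b p 0 + TTP.ff a b p (K:ℝ)) / 2
          - ∫ t in (0:ℝ)..(K:ℝ), TTP.ff a b p t)) := by
      have := hQsum.tendsto_sum_nat.comp (Filter.tendsto_add_atTop_nat 1)
      exact this
    have h2 := h1.const_add (J 0)
    have : J 0 + (T - (TTP.ff a b p 0 + TTP.ff a b p (K:ℝ)) / 2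
        - ∫ t in (0:ℝ)..(K:ℝ), TTP.ff a b p t)
        = T - (TTP.ff a b p 0 + TTP.ff a b p (K:ℝ)) / 2 := by
      rw [hJ0]; ring
    rw [this] at h2
    exact Filter.Tendsto.congr (fun M => (hdecomp M).symm) h2
  refine ⟨((K:ℂ)^j)⁻¹ * (T - (TTP.ff a b p 0 + TTP.ff a b p (K:ℝ)) / 2), ?_, ?_⟩
  · have := htend.const_mul (((K:ℂ)^j)⁻¹)
    apply Filter.Tendsto.congr _ this
    intro M
    rw [Finset.mul_sum]
    refine Finset.sum_congr rfl fun m _ => ?_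
    exact (TTP.IC0_eq K j a b m).symm
  · rw [TTP.truncTheta_eq K j a b, ← hp, ← hT]
    have hKc : ((K:ℂ)) ≠ 0 := Nat.cast_ne_zero.mpr (by omega)
    have hKj : ((K:ℂ)^j) ≠ 0 := pow_ne_zero _ hKc
    have hf0 : TTP.ff a b p 0 = if j = 0 then 1 else 0 := by
      simp only [hp, TTP.ff, Complex.ofReal_zero, Polynomial.eval_pow, Polynomial.eval_X]
      rw [zero_pow_eq]
      simp [Complex.exp_zero]
    have hfK : TTP.ff a b p (K:ℝ) = (K:ℂ)^j *
        Complex.exp (2 * (Real.pi : ℂ) * Complex.I * (a : ℂ) * (K : ℂ) +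
          2 * (Real.pi : ℂ) * Complex.I * (b : ℂ) * (K : ℂ) ^ 2) := by
      simp only [hp, TTP.ff, TTP.cc, Polynomial.eval_pow, Polynomial.eval_X]
      push_cast
      ring_nf
    rw [hf0, hfK]
    rcases Nat.eq_zero_or_pos j with hj | hj
    · subst hj
      simp only [pow_zero, if_pos rfl, inv_one, one_mul]
      ring
    · rw [if_neg (by omega)]
      field_simp
      ring
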